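/- Let ⟨A, Δ⟩ be a Jordan coalgebra over a field k of characteristic not 2 whose dual algebra A* is unital, and let ⟨L(A), Δ_L⟩ be the Lie coalgebra of Theorem 1. If L is a coideal of ⟨L(A), Δ_L⟩ that is closed under the map π and satisfies L ⊆ U^⊥, then V = A ∩ L is a coideal of ⟨A, Δ⟩, and L₁*(V) ⊆ L ⊆ L₂*(V). -/

import Mathlib

open TensorProduct

variable {k : Type*} [Field k] {A : Type*} [AddCommGroup A] [Module k A]

/-- The multiplication on the dual space `A*` induced by a comultiplication `Δ`:
`⟨fg, a⟩ = Σ ⟨f, a₍₁₎⟩⟨g, a₍₂₎⟩`. -/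
noncomputable def dmul (Δ : A →ₗ[k] A ⊗[k] A) (f g : (A →ₗ[k] k)) : (A →ₗ[k] k) :=
  (TensorProduct.lid k k).toLinearMap ∘ₗ TensorProduct.map f g ∘ₗ Δ

/-- The left action `f·a = Σ a₍₁₎ ⟨f, a₍₂₎⟩` of the dual algebra on `A`. -/
noncomputable def lact (Δ : A →ₗ[k] A ⊗[k] A) (f : (A →ₗ[k] k)) : A →ₗ[k] A :=
  (TensorProduct.rid k A).toLinearMap ∘ₗ TensorProduct.map LinearMap.id f ∘ₗ Δ

/-- The right action `a·f = Σ ⟨f, a₍₁₎⟩ a₍₂₎` of the dual algebra on `A`. -/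
noncomputable def ract (Δ : A →ₗ[k] A ⊗[k] A) (f : (A →ₗ[k] k)) : A →ₗ[k] A :=
  (TensorProduct.lid k A).toLinearMap ∘ₗ TensorProduct.map f LinearMap.id ∘ₗ Δ

/-- `⟨A, Δ⟩` is a Jordan coalgebra: its dual algebra is commutative and satisfies
the Jordan identity `((ff)g)f = (ff)(gf)`. -/
def IsJordanCoalgebra (Δ : A →ₗ[k] A ⊗[k] A) : Prop :=
  (∀ f g : (A →ₗ[k] k), dmul Δ f g = dmul Δ g f) ∧
  (∀ f g : (A →ₗ[k] k),
    dmul Δ (dmul Δ (dmul Δ f f) g) f = dmul Δ (dmul Δ f f) (dmul Δ g f))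

/-- `B` is a subcoalgebra: `Δ(B) ⊆ B ⊗ B`. -/
def IsSubcoalgebra (Δ : A →ₗ[k] A ⊗[k] A) (B : Submodule k A) : Prop :=
  ∀ b ∈ B, Δ b ∈ LinearMap.range (TensorProduct.map B.subtype B.subtype)

/-- `B` is a coideal: `Δ(B) ⊆ B ⊗ A + A ⊗ B`. -/
def IsCoideal (Δ : A →ₗ[k] A ⊗[k] A) (B : Submodule k A) : Prop :=
  ∀ b ∈ B, Δ b ∈
    LinearMap.range (TensorProduct.map B.subtype (LinearMap.id (R := k) (M := A))) ⊔
    LinearMap.range (TensorProduct.map (LinearMap.id (R := k) (M := A)) B.subtype)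

/-- A derivation of the dual algebra `A*`. -/
def IsDerivation (Δ : A →ₗ[k] A ⊗[k] A)
    (d : (A →ₗ[k] k) →ₗ[k] (A →ₗ[k] k)) : Prop :=
  ∀ f g : (A →ₗ[k] k), d (dmul Δ f g) = dmul Δ (d f) g + dmul Δ f (d g)

theorem dmul_add_left (Δ : A →ₗ[k] A ⊗[k] A) (f₁ f₂ g : (A →ₗ[k] k)) :
    dmul Δ (f₁ + f₂) g = dmul Δ f₁ g + dmul Δ f₂ g := by
  unfold dmul; rw [TensorProduct.map_add_left]; ext a; simp

theorem dmul_add_right (Δ : A →ₗ[k] A ⊗[k] A) (f g₁ g₂ : (A →ₗ[k] k)) :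
    dmul Δ f (g₁ + g₂) = dmul Δ f g₁ + dmul Δ f g₂ := by
  unfold dmul; rw [TensorProduct.map_add_right]; ext a; simp

theorem dmul_smul_left (Δ : A →ₗ[k] A ⊗[k] A) (c : k) (f g : (A →ₗ[k] k)) :
    dmul Δ (c • f) g = c • dmul Δ f g := by
  unfold dmul; rw [TensorProduct.map_smul_left]; ext a; simp

theorem dmul_smul_right (Δ : A →ₗ[k] A ⊗[k] A) (c : k) (f g : (A →ₗ[k] k)) :
    dmul Δ f (c • g) = c • dmul Δ f g := by
  unfold dmul; rw [TensorProduct.map_smul_right]; ext a; simp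

theorem dmul_zero_left (Δ : A →ₗ[k] A ⊗[k] A) (g : (A →ₗ[k] k)) :
    dmul Δ (0 : (A →ₗ[k] k)) g = 0 := by
  ext a; simp [dmul]

theorem dmul_zero_right (Δ : A →ₗ[k] A ⊗[k] A) (f : (A →ₗ[k] k)) :
    dmul Δ f (0 : (A →ₗ[k] k)) = 0 := by
  ext a; simp [dmul]

/-- The operator of right multiplication `f' : g ↦ gf` on the dual algebra. -/
noncomputable def Rop (Δ : A →ₗ[k] A ⊗[k] A) (f : (A →ₗ[k] k)) :
    (A →ₗ[k] k) →ₗ[k] (A →ₗ[k] k) where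
  toFun g := dmul Δ g f
  map_add' g₁ g₂ := dmul_add_left Δ g₁ g₂ f
  map_smul' c g := dmul_smul_left Δ c g f

/-- The inner derivation `[f,g] = f'g' - g'f'` (in right-operator convention,
`x[f,g] = (xf)g - (xg)f`). -/
noncomputable def commD (Δ : A →ₗ[k] A ⊗[k] A) (f g : (A →ₗ[k] k)) :
    (A →ₗ[k] k) →ₗ[k] (A →ₗ[k] k) :=
  Rop Δ g ∘ₗ Rop Δ f - Rop Δ f ∘ₗ Rop Δ g

/-- The space of inner derivations of the dual algebra. -/
noncomputable def IntDer (Δ : A →ₗ[k] A ⊗[k] A) :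
    Submodule k ((A →ₗ[k] k) →ₗ[k] (A →ₗ[k] k)) :=
  Submodule.span k {d | ∃ f g : (A →ₗ[k] k), d = commD Δ f g}

/-- A weakly inner derivation of the dual algebra: a derivation that agrees with some
inner derivation on every finite-dimensional subcoalgebra. -/
def IsWIntDer (Δ : A →ₗ[k] A ⊗[k] A)
    (d : (A →ₗ[k] k) →ₗ[k] (A →ₗ[k] k)) : Prop :=
  IsDerivation Δ d ∧
  ∀ B : Submodule k A, IsSubcoalgebra Δ B → FiniteDimensional k B →
    ∃ i ∈ IntDer Δ, ∀ f : (A →ₗ[k] k), ∀ b ∈ B, d f b = i f b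

/-- The space of weakly inner derivations, as a submodule of `End(A*)`. -/
noncomputable def WIntDer (Δ : A →ₗ[k] A ⊗[k] A) :
    Submodule k ((A →ₗ[k] k) →ₗ[k] (A →ₗ[k] k)) where
  carrier := {d | IsWIntDer Δ d}
  zero_mem' := by
    refine ⟨fun f g => by simp [dmul_zero_left, dmul_zero_right],
      fun B hB hfin => ⟨0, Submodule.zero_mem _, fun f b hb => by simp⟩⟩
  add_mem' := by
    rintro d₁ d₂ ⟨hd₁, hw₁⟩ ⟨hd₂, hw₂⟩
    refine ⟨fun f g => ?_, fun B hB hfin => ?_⟩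
    · simp only [LinearMap.add_apply, hd₁ f g, hd₂ f g, dmul_add_left, dmul_add_right]
      abel
    · obtain ⟨i₁, hi₁, he₁⟩ := hw₁ B hB hfin
      obtain ⟨i₂, hi₂, he₂⟩ := hw₂ B hB hfin
      exact ⟨i₁ + i₂, Submodule.add_mem _ hi₁ hi₂, fun f b hb => by
        simp [LinearMap.add_apply, he₁ f b hb, he₂ f b hb]⟩
  smul_mem' := by
    rintro c d ⟨hd, hw⟩
    refine ⟨fun f g => ?_, fun B hB hfin => ?_⟩
    · simp only [LinearMap.smul_apply, hd f g, dmul_smul_left, dmul_smul_right, smul_add]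
    · obtain ⟨i, hi, he⟩ := hw B hB hfin
      exact ⟨c • i, Submodule.smul_mem _ c hi, fun f b hb => by
        simp [LinearMap.smul_apply, he f b hb]⟩
/-- Multiplication in the null extension `C = A* ⊕ A`. -/
noncomputable def cmul (Δ : A →ₗ[k] A ⊗[k] A) (x y : (A →ₗ[k] k) × A) :
    (A →ₗ[k] k) × A :=
  (dmul Δ x.1 y.1, lact Δ x.1 y.2 + lact Δ y.1 x.2)

theorem lact_add_left (Δ : A →ₗ[k] A ⊗[k] A) (f₁ f₂ : (A →ₗ[k] k)) (a : A) :
    lact Δ (f₁ + f₂) a = lact Δ f₁ a + lact Δ f₂ a := by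
  simp [lact, TensorProduct.map_add_right]

theorem lact_smul_left (Δ : A →ₗ[k] A ⊗[k] A) (c : k) (f : (A →ₗ[k] k)) (a : A) :
    lact Δ (c • f) a = c • lact Δ f a := by
  simp [lact, TensorProduct.map_smul_right]

/-- Right multiplication by an element of the null extension `C = A* ⊕ A`,
as a linear operator on `C`. -/
noncomputable def RopC (Δ : A →ₗ[k] A ⊗[k] A) (x : (A →ₗ[k] k) × A) :
    ((A →ₗ[k] k) × A) →ₗ[k] ((A →ₗ[k] k) × A) where
  toFun y := cmul Δ y x
  map_add' y z := by
    simp only [cmul, Prod.fst_add, Prod.snd_add, Prod.mk_add_mk, dmul_add_left,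
      lact_add_left, map_add]
    rw [Prod.mk.injEq]
    constructor
    · rfl
    · abel
  map_smul' c y := by
    simp only [cmul, Prod.smul_fst, Prod.smul_snd, Prod.smul_mk, dmul_smul_left,
      lact_smul_left, map_smul, RingHom.id_apply, smul_add]

/-- The operator `[x,y] = x'y' - y'x'` on the null extension `C`
(right-operator convention: `z[x,y] = (zx)y - (zy)x`). -/
noncomputable def commC (Δ : A →ₗ[k] A ⊗[k] A) (x y : (A →ₗ[k] k) × A) :
    ((A →ₗ[k] k) × A) →ₗ[k] ((A →ₗ[k] k) × A) :=
  RopC Δ y ∘ₗ RopC Δ x - RopC Δ x ∘ₗ RopC Δ y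

/-- The mixed commutator operator `[f,a]` on `C`, for `f ∈ A*` and `a ∈ A`. -/
noncomputable def commMixed (Δ : A →ₗ[k] A ⊗[k] A) (f : (A →ₗ[k] k)) (a : A) :
    ((A →ₗ[k] k) × A) →ₗ[k] ((A →ₗ[k] k) × A) :=
  commC Δ (f, 0) (0, a)

/-- The space `[A*, A]`, spanned by the mixed commutators, inside `End(C)`. -/
noncomputable def CommAA (Δ : A →ₗ[k] A ⊗[k] A) :
    Submodule k (((A →ₗ[k] k) × A) →ₗ[k] ((A →ₗ[k] k) × A)) :=
  Submodule.span k {u | ∃ (f : (A →ₗ[k] k)) (a : A), u = commMixed Δ f a}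

/-- The additive group structure of `[A*, A]` (the canonical `Submodule.addCommGroup`,
supplied explicitly since instance search no longer finds it here). -/
noncomputable instance CommAA.addCommGroup (Δ : A →ₗ[k] A ⊗[k] A) :
    AddCommGroup ↥(CommAA Δ) :=
  @Submodule.addCommGroup k _ _ LinearMap.addCommGroup LinearMap.module (CommAA Δ)

/-- The Kantor–Koecher–Tits bracket on `L(A*) = A* ⊕ (A*)' ⊕ WIntDer(A*) ⊕ Ā*`
(the third component is taken in `End(A*)`; for elements of `L(A*)` it lies in
`WIntDer(A*)`).  An element `(a, g, d, b)` represents `a + g' + d + b̄`. -/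
noncomputable def bracketStar (Δ : A →ₗ[k] A ⊗[k] A)
    (l₁ l₂ : (A →ₗ[k] k) × (A →ₗ[k] k) × ((A →ₗ[k] k) →ₗ[k] (A →ₗ[k] k)) × (A →ₗ[k] k)) :
    (A →ₗ[k] k) × (A →ₗ[k] k) × ((A →ₗ[k] k) →ₗ[k] (A →ₗ[k] k)) × (A →ₗ[k] k) :=
  (dmul Δ l₁.1 l₂.2.1 + l₂.2.2.1 l₁.1 - dmul Δ l₂.1 l₁.2.1 - l₁.2.2.1 l₂.1,
   dmul Δ l₁.1 l₂.2.2.2 - dmul Δ l₂.1 l₁.2.2.2 + l₂.2.2.1 l₁.2.1 - l₁.2.2.1 l₂.2.1,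
   - commD Δ l₁.1 l₂.2.2.2 + commD Δ l₂.1 l₁.2.2.2 + commD Δ l₁.2.1 l₂.2.1
     + (l₂.2.2.1 ∘ₗ l₁.2.2.1 - l₁.2.2.1 ∘ₗ l₂.2.2.1),
   - dmul Δ l₁.2.2.2 l₂.2.1 + l₂.2.2.1 l₁.2.2.2 + dmul Δ l₂.2.2.2 l₁.2.1
     - l₁.2.2.1 l₂.2.2.2)

/-- The involution `ε(a + c' + d + b̄) = b - c' + d + ā` on `L(A*)`. -/
def epsStar
    (l : (A →ₗ[k] k) × (A →ₗ[k] k) × ((A →ₗ[k] k) →ₗ[k] (A →ₗ[k] k)) × (A →ₗ[k] k)) :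
    (A →ₗ[k] k) × (A →ₗ[k] k) × ((A →ₗ[k] k) →ₗ[k] (A →ₗ[k] k)) × (A →ₗ[k] k) :=
  (l.2.2.2, - l.2.1, l.2.2.1, l.1)

/-- The module action `[l, l*]` of `L(A*)` on `L(A) = A ⊕ A' ⊕ [A*,A] ⊕ Ā`.
`Dex d` is the canonical extension of a weakly inner derivation `d` to `A`
(Proposition 2), passed as a parameter.  An element `(a, b, v, c)` of `L(A)`
represents `a + b' + v + c̄`. -/
noncomputable def actLL (Δ : A →ₗ[k] A ⊗[k] A)
    (Dex : ((A →ₗ[k] k) →ₗ[k] (A →ₗ[k] k)) → (A →ₗ[k] A))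
    (l : A × A × (((A →ₗ[k] k) × A) →ₗ[k] ((A →ₗ[k] k) × A)) × A)
    (ls : (A →ₗ[k] k) × (A →ₗ[k] k) × ((A →ₗ[k] k) →ₗ[k] (A →ₗ[k] k)) × (A →ₗ[k] k)) :
    A × A × (((A →ₗ[k] k) × A) →ₗ[k] ((A →ₗ[k] k) × A)) × A :=
  (lact Δ ls.2.1 l.1 + Dex ls.2.2.1 l.1 - lact Δ ls.1 l.2.1 - (l.2.2.1 (ls.1, 0)).2,
   ract Δ ls.2.2.2 l.1 - lact Δ ls.1 l.2.2.2 + Dex ls.2.2.1 l.2.1,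
   commMixed Δ ls.2.2.2 l.1 + commMixed Δ ls.1 l.2.2.2 - commMixed Δ ls.2.1 l.2.1
     + (RopC Δ (ls.2.1, 0) ∘ₗ l.2.2.1 - l.2.2.1 ∘ₗ RopC Δ (ls.2.1, 0))
     + ((LinearMap.prodMap ls.2.2.1 (Dex ls.2.2.1)) ∘ₗ l.2.2.1
        - l.2.2.1 ∘ₗ (LinearMap.prodMap ls.2.2.1 (Dex ls.2.2.1))),
   - lact Δ ls.2.1 l.2.2.2 + Dex ls.2.2.1 l.2.2.2 + lact Δ ls.2.2.2 l.2.1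
     - (l.2.2.1 (ls.2.2.2, 0)).2)

/-- The natural pairing between `L(A*)` and `L(A)`, via the identification
`WIntDer(A*) ≅ ([A*,A])*` given by `φ` (Lemma 2). -/
noncomputable def pairSF (Δ : A →ₗ[k] A ⊗[k] A)
    (φ : ↥(WIntDer Δ) →ₗ[k] (↥(CommAA Δ) →ₗ[k] k))
    (ls : (A →ₗ[k] k) × (A →ₗ[k] k) × ((A →ₗ[k] k) →ₗ[k] (A →ₗ[k] k)) × (A →ₗ[k] k))
    (l : A × A × (((A →ₗ[k] k) × A) →ₗ[k] ((A →ₗ[k] k) × A)) × A)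
    (hd : ls.2.2.1 ∈ WIntDer Δ) (hv : l.2.2.1 ∈ CommAA Δ) : k :=
  ls.1 l.1 + ls.2.1 l.2.1 + φ ⟨ls.2.2.1, hd⟩ ⟨l.2.2.1, hv⟩ + ls.2.2.2 l.2.2.2

/-- The space `L(A) = A ⊕ A' ⊕ [A*,A] ⊕ Ā` underlying the Lie coalgebra of Theorem 1.
An element `(a, b, v, c)` represents `a + b' + v + c̄`. -/
@[reducible] def LKKT (Δ : A →ₗ[k] A ⊗[k] A) : Type _ :=
  A × A × ↥(CommAA Δ) × A

/-- An element of `L(A*) = A* ⊕ (A*)' ⊕ WIntDer(A*) ⊕ Ā*` as a linear functional on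
`L(A)`, via the identification `WIntDer(A*) ≅ ([A*,A])*` given by `φ` (Lemma 2). -/
noncomputable def toFunc (Δ : A →ₗ[k] A ⊗[k] A)
    (φ : ↥(WIntDer Δ) →ₗ[k] (↥(CommAA Δ) →ₗ[k] k))
    (f : (A →ₗ[k] k) × (A →ₗ[k] k) × ((A →ₗ[k] k) →ₗ[k] (A →ₗ[k] k)) × (A →ₗ[k] k))
    (hf : f.2.2.1 ∈ WIntDer Δ) : LKKT Δ →ₗ[k] k :=
  f.1 ∘ₗ LinearMap.fst k A (A × (↥(CommAA Δ) × A)) +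
  f.2.1 ∘ₗ (LinearMap.fst k A (↥(CommAA Δ) × A)
      ∘ₗ LinearMap.snd k A (A × (↥(CommAA Δ) × A))) +
  (φ ⟨f.2.2.1, hf⟩) ∘ₗ (LinearMap.fst k ↥(CommAA Δ) A
      ∘ₗ LinearMap.snd k A (↥(CommAA Δ) × A)
      ∘ₗ LinearMap.snd k A (A × (↥(CommAA Δ) × A))) +
  f.2.2.2 ∘ₗ (LinearMap.snd k ↥(CommAA Δ) A
      ∘ₗ LinearMap.snd k A (↥(CommAA Δ) × A)
      ∘ₗ LinearMap.snd k A (A × (↥(CommAA Δ) × A)))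

/-- The standard embedding `ρ` on a pair of functionals: `ρ(F ⊗ G)` as a functional
on `M ⊗ M`. -/
noncomputable def pairT {M : Type*} [AddCommGroup M] [Module k M]
    (F G : M →ₗ[k] k) : (M ⊗[k] M) →ₗ[k] k :=
  (TensorProduct.lid k k).toLinearMap ∘ₗ TensorProduct.map F G

/-- The map `π(a + b' + v + c̄) = c - b' + v + ā` on `L(A)`. -/
def piL (Δ : A →ₗ[k] A ⊗[k] A) (l : LKKT Δ) : LKKT Δ :=
  (l.2.2.2, - l.2.1, l.2.2.1, l.1)

/-- The natural inclusion `A → L(A)`. -/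
noncomputable def inclA (Δ : A →ₗ[k] A ⊗[k] A) : A →ₗ[k] LKKT Δ :=
  LinearMap.prod LinearMap.id (LinearMap.prod 0 (LinearMap.prod 0 0))

/-- The subspace `d*(V) = {v ∈ [A*,A] | V^⊥ · v ⊆ V}` of `[A*,A]`. -/
noncomputable def dstarSub (Δ : A →ₗ[k] A ⊗[k] A) (V : Submodule k A) :
    Submodule k ↥(CommAA Δ) where
  carrier := {w | ∀ f ∈ V.dualAnnihilator,
    (((w : ((A →ₗ[k] k) × A) →ₗ[k] ((A →ₗ[k] k) × A))) (f, 0)).2 ∈ V}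
  zero_mem' := by intro f hf; simp
  add_mem' := by
    intro w₁ w₂ h₁ h₂ f hf
    simp only [Submodule.coe_add, LinearMap.add_apply, Prod.snd_add]
    exact V.add_mem (h₁ f hf) (h₂ f hf)
  smul_mem' := by
    intro c w h f hf
    simp only [SetLike.val_smul, LinearMap.smul_apply, Prod.smul_snd]
    exact V.smul_mem c (h f hf)

/-- The coideal `L₁*(V) = V ⊕ V' ⊕ [V^⊥, V] ⊕ V̄` of `⟨L(A), Δ_L⟩`. -/
noncomputable def L1star (Δ : A →ₗ[k] A ⊗[k] A) (V : Submodule k A) :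
    Submodule k (LKKT Δ) :=
  V.prod (V.prod ((Submodule.comap (CommAA Δ).subtype
    (Submodule.span k {u | ∃ f ∈ V.dualAnnihilator, ∃ x ∈ V, u = commMixed Δ f x})).prod V))

/-- The coideal `L₂*(V) = V ⊕ V' ⊕ d*(V) ⊕ V̄` of `⟨L(A), Δ_L⟩`. -/
noncomputable def L2star (Δ : A →ₗ[k] A ⊗[k] A) (V : Submodule k A) :
    Submodule k (LKKT Δ) :=
  V.prod (V.prod ((dstarSub Δ V).prod V))

/-! ### Auxiliary infrastructure -/

section Aux

variable {M N M' : Type*} [AddCommMonoid M] [Module k M] [AddCommMonoid N] [Module k N]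
  [AddCommMonoid M'] [Module k M']

/-- Contraction with a functional on the right factor. -/
noncomputable def cR (G : N →ₗ[k] k) : M ⊗[k] N →ₗ[k] M :=
  (TensorProduct.rid k M).toLinearMap ∘ₗ TensorProduct.map LinearMap.id G

theorem cR_tmul (G : N →ₗ[k] k) (x : M) (y : N) : cR G (x ⊗ₜ[k] y) = G y • x := by
  simp [cR]

/-- Contraction with a functional on the left factor. -/
noncomputable def cL (F : M →ₗ[k] k) : M ⊗[k] N →ₗ[k] N :=
  (TensorProduct.lid k N).toLinearMap ∘ₗ TensorProduct.map F LinearMap.id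

theorem cL_tmul (F : M →ₗ[k] k) (x : M) (y : N) : cL F (x ⊗ₜ[k] y) = F x • y := by
  simp [cL]

/-- A monoid-instance clone of `pairT`. -/
noncomputable def pairT' (F G : M →ₗ[k] k) : (M ⊗[k] M) →ₗ[k] k :=
  (TensorProduct.lid k k).toLinearMap ∘ₗ TensorProduct.map F G

theorem pairT'_tmul (F G : M →ₗ[k] k) (x y : M) :
    pairT' F G (x ⊗ₜ[k] y) = F x * G y := by
  simp [pairT', smul_eq_mul]

theorem pairT'_eq_cR (F G : M →ₗ[k] k) (t : M ⊗[k] M) :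
    pairT' F G t = F (cR G t) := by
  induction t with
  | zero => simp
  | tmul x y => rw [pairT'_tmul, cR_tmul, map_smul, smul_eq_mul, mul_comm]
  | add x y hx hy => simp [map_add, hx, hy]

theorem cR_map_left_mem (S : Submodule k M) (G : N →ₗ[k] k)
    (s : ↥S ⊗[k] N) :
    cR G (TensorProduct.map S.subtype LinearMap.id s) ∈ S := by
  induction s with
  | zero => simp
  | tmul x y => rw [TensorProduct.map_tmul, cR_tmul]; exact S.smul_mem _ x.2
  | add x y hx hy => rw [map_add, map_add]; exact S.add_mem hx hy

theorem cR_map_right_zero (S : Submodule k N) (G : N →ₗ[k] k)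
    (hG : ∀ y : ↥S, G ↑y = 0) (s : M ⊗[k] ↥S) :
    cR G (TensorProduct.map LinearMap.id S.subtype s) = 0 := by
  induction s with
  | zero => simp
  | tmul x y => rw [TensorProduct.map_tmul, cR_tmul]; simp [hG y]
  | add x y hx hy => rw [map_add, map_add, hx, hy, add_zero]

theorem cL_map_right_mem (S : Submodule k N) (F : M →ₗ[k] k)
    (s : M ⊗[k] ↥S) :
    cL F (TensorProduct.map LinearMap.id S.subtype s) ∈ S := by
  induction s with
  | zero => simp
  | tmul x y => rw [TensorProduct.map_tmul, cL_tmul]; exact S.smul_mem _ y.2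
  | add x y hx hy => rw [map_add, map_add]; exact S.add_mem hx hy

theorem cL_map_left_zero (S : Submodule k M) (F : M →ₗ[k] k)
    (hF : ∀ x : ↥S, F ↑x = 0) (s : ↥S ⊗[k] N) :
    cL F (TensorProduct.map S.subtype LinearMap.id s) = 0 := by
  induction s with
  | zero => simp
  | tmul x y => rw [TensorProduct.map_tmul, cL_tmul]; simp [hF x]
  | add x y hx hy => rw [map_add, map_add, hx, hy, add_zero]

theorem map_map_left_mem (P₁ P₂ : M →ₗ[k] M') (S : Submodule k M) (V : Submodule k M')
    (h : ∀ x : ↥S, P₁ ↑x ∈ V) (s : ↥S ⊗[k] M) :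
    TensorProduct.map P₁ P₂ (TensorProduct.map S.subtype LinearMap.id s) ∈
      LinearMap.range (TensorProduct.map V.subtype (LinearMap.id (R := k) (M := M'))) := by
  induction s with
  | zero => simp
  | tmul x y =>
      refine ⟨(⟨P₁ ↑x, h x⟩ : ↥V) ⊗ₜ[k] P₂ y, ?_⟩
      simp
  | add x y hx hy => rw [map_add, map_add]; exact Submodule.add_mem _ hx hy

theorem map_map_right_mem (P₁ P₂ : M →ₗ[k] M') (S : Submodule k M) (V : Submodule k M')
    (h : ∀ x : ↥S, P₂ ↑x ∈ V) (s : M ⊗[k] ↥S) :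
    TensorProduct.map P₁ P₂ (TensorProduct.map LinearMap.id S.subtype s) ∈
      LinearMap.range (TensorProduct.map (LinearMap.id (R := k) (M := M')) V.subtype) := by
  induction s with
  | zero => simp
  | tmul x y =>
      refine ⟨P₁ x ⊗ₜ[k] (⟨P₂ ↑y, h y⟩ : ↥V), ?_⟩
      simp
  | add x y hx hy => rw [map_add, map_add]; exact Submodule.add_mem _ hx hy

theorem contract_mem (S : Submodule k M) (G : M →ₗ[k] k)
    (hG : ∀ y : ↥S, G ↑y = 0) (t : M ⊗[k] M)
    (ht : t ∈ LinearMap.range (TensorProduct.map S.subtype (LinearMap.id (R := k) (M := M)))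
      ⊔ LinearMap.range (TensorProduct.map (LinearMap.id (R := k) (M := M)) S.subtype)) :
    cR G t ∈ S := by
  obtain ⟨t₁, ht₁, t₂, ht₂, hsum⟩ := Submodule.mem_sup.mp ht
  obtain ⟨s₁, rfl⟩ := ht₁
  obtain ⟨s₂, rfl⟩ := ht₂
  rw [← hsum, map_add, cR_map_right_zero S G hG s₂, add_zero]
  exact cR_map_left_mem S G s₁

theorem contract_left_mem (S : Submodule k M) (F : M →ₗ[k] k)
    (hF : ∀ y : ↥S, F ↑y = 0) (t : M ⊗[k] M)
    (ht : t ∈ LinearMap.range (TensorProduct.map S.subtype (LinearMap.id (R := k) (M := M)))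
      ⊔ LinearMap.range (TensorProduct.map (LinearMap.id (R := k) (M := M)) S.subtype)) :
    cL F t ∈ S := by
  obtain ⟨t₁, ht₁, t₂, ht₂, hsum⟩ := Submodule.mem_sup.mp ht
  obtain ⟨s₁, rfl⟩ := ht₁
  obtain ⟨s₂, rfl⟩ := ht₂
  rw [← hsum, map_add, cL_map_left_zero S F hF s₁, zero_add]
  exact cL_map_right_mem S F s₂

theorem coideal_map_mem (P₁ P₂ : M →ₗ[k] M') (S : Submodule k M) (V : Submodule k M')
    (h1 : ∀ x : ↥S, P₁ ↑x ∈ V) (h2 : ∀ x : ↥S, P₂ ↑x ∈ V) (t : M ⊗[k] M)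
    (ht : t ∈ LinearMap.range (TensorProduct.map S.subtype (LinearMap.id (R := k) (M := M)))
      ⊔ LinearMap.range (TensorProduct.map (LinearMap.id (R := k) (M := M)) S.subtype)) :
    TensorProduct.map P₁ P₂ t ∈
      LinearMap.range (TensorProduct.map V.subtype (LinearMap.id (R := k) (M := M')))
      ⊔ LinearMap.range (TensorProduct.map (LinearMap.id (R := k) (M := M')) V.subtype) := by
  obtain ⟨t₁, ht₁, t₂, ht₂, hsum⟩ := Submodule.mem_sup.mp ht
  obtain ⟨s₁, rfl⟩ := ht₁
  obtain ⟨s₂, rfl⟩ := ht₂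
  rw [← hsum, map_add]
  exact Submodule.add_mem _
    (Submodule.mem_sup_left (map_map_left_mem P₁ P₂ S V h1 s₁))
    (Submodule.mem_sup_right (map_map_right_mem P₁ P₂ S V h2 s₂))

end Aux

section AuxGroup

variable {M M' : Type*} [AddCommGroup M] [Module k M] [AddCommMonoid M'] [Module k M']

theorem pairT_tmul (F : M →ₗ[k] k) (G : M →ₗ[k] k) (x y : M) :
    pairT F G (x ⊗ₜ[k] y) = F x * G y := by
  simp [pairT, smul_eq_mul]

/-- `pairT` composed with a map of tensor products, expressed via `pairT'`. -/
theorem pairT_map (f g : M →ₗ[k] k) (P₁ P₂ : M' →ₗ[k] M) (t : M' ⊗[k] M') :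
    pairT f g (TensorProduct.map P₁ P₂ t) = pairT' (f ∘ₗ P₁) (g ∘ₗ P₂) t := by
  induction t with
  | zero => simp
  | tmul x y => rw [TensorProduct.map_tmul, pairT_tmul, pairT'_tmul]; rfl
  | add x y hx hy => simp [map_add, hx, hy]

theorem dual_sep (x : M) (h : ∀ f : M →ₗ[k] k, f x = 0) : x = 0 :=
  (Module.forall_dual_apply_eq_zero_iff k x).mp h

theorem dual_pin (x y : M) (h : ∀ f : M →ₗ[k] k, f x = f y) : x = y := by
  have : x - y = 0 := dual_sep (k := k) (x - y) fun f => by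
    rw [show f (x - y) = f x - f y from map_sub f x y, h f, sub_self]
  rw [← sub_add_cancel x y, this, zero_add]

theorem tensor_sep (t : M ⊗[k] M)
    (h : ∀ F G : M →ₗ[k] k, pairT F G t = 0) : t = 0 := by
  classical
  let b := Module.Basis.ofVectorSpace k M
  let bt := b.tensorProduct b
  apply bt.repr.injective
  ext ij
  obtain ⟨i, j⟩ := ij
  have key : (Finsupp.lapply (i, j) ∘ₗ (bt.repr : M ⊗[k] M →ₗ[k] _))
      = pairT (b.coord i) (b.coord j) := by
    apply Module.Basis.ext bt
    rintro ⟨i', j'⟩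
    have hb : bt (i', j') = b i' ⊗ₜ[k] b j' := Module.Basis.tensorProduct_apply' b b _
    rw [hb]
    simp only [LinearMap.comp_apply, LinearEquiv.coe_coe, Finsupp.lapply_apply]
    rw [pairT_tmul, ← hb, Module.Basis.repr_self]
    simp only [Module.Basis.coord_apply, Module.Basis.repr_self]
    rw [Finsupp.single_apply, Finsupp.single_apply, Finsupp.single_apply]
    by_cases h1 : i' = i <;> by_cases h2 : j' = j <;>
      simp [h1, h2, Prod.ext_iff]
  have := congrArg (fun (L : M ⊗[k] M →ₗ[k] k) => L t) key
  simp only [LinearMap.comp_apply, LinearEquiv.coe_coe, Finsupp.lapply_apply] at this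
  rw [this, h]
  simp

theorem tensor_pin (t s : M ⊗[k] M)
    (h : ∀ F G : M →ₗ[k] k, pairT F G t = pairT F G s) : t = s := by
  have : t - s = 0 := tensor_sep (t - s) fun F G => by rw [map_sub, h F G, sub_self]
  rw [← sub_add_cancel t s, this, zero_add]

end AuxGroup

section Alg

variable (Δ : A →ₗ[k] A ⊗[k] A)

theorem dmul_neg_left (f g : (A →ₗ[k] k)) : dmul Δ (-f) g = - dmul Δ f g := by
  rw [eq_neg_iff_add_eq_zero, ← dmul_add_left, neg_add_cancel, dmul_zero_left]

theorem dmul_neg_right (f g : (A →ₗ[k] k)) : dmul Δ f (-g) = - dmul Δ f g := by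
  rw [eq_neg_iff_add_eq_zero, ← dmul_add_right, neg_add_cancel, dmul_zero_right]

theorem dmul_sub_left (f₁ f₂ g : (A →ₗ[k] k)) :
    dmul Δ (f₁ - f₂) g = dmul Δ f₁ g - dmul Δ f₂ g := by
  rw [sub_eq_add_neg, dmul_add_left, dmul_neg_left, sub_eq_add_neg]

theorem dmul_sub_right (f g₁ g₂ : (A →ₗ[k] k)) :
    dmul Δ f (g₁ - g₂) = dmul Δ f g₁ - dmul Δ f g₂ := by
  rw [sub_eq_add_neg, dmul_add_right, dmul_neg_right, sub_eq_add_neg]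

@[simp] theorem Rop_apply (f g : (A →ₗ[k] k)) : Rop Δ f g = dmul Δ g f := rfl

theorem commD_apply (f g x : (A →ₗ[k] k)) :
    commD Δ f g x = dmul Δ (dmul Δ x f) g - dmul Δ (dmul Δ x g) f := rfl

theorem Rop_zero : Rop Δ (0 : A →ₗ[k] k) = 0 := by
  ext g a; simp [Rop_apply, dmul_zero_right]

theorem commD_zero_left (g : (A →ₗ[k] k)) : commD Δ 0 g = 0 := by
  unfold commD; rw [Rop_zero]; simp; exact sub_self (0 : (A →ₗ[k] k) →ₗ[k] (A →ₗ[k] k))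

theorem commD_zero_right (f : (A →ₗ[k] k)) : commD Δ f 0 = 0 := by
  unfold commD; rw [Rop_zero]; simp; exact sub_self (0 : (A →ₗ[k] k) →ₗ[k] (A →ₗ[k] k))

variable {Δ}

theorem Rop_one {one : A →ₗ[k] k} (hone : ∀ f, dmul Δ one f = f ∧ dmul Δ f one = f) :
    Rop Δ one = LinearMap.id := by
  ext g a; simp [Rop_apply, (hone g).2]

theorem commD_one_left {one : A →ₗ[k] k} (hone : ∀ f, dmul Δ one f = f ∧ dmul Δ f one = f)
    (g : (A →ₗ[k] k)) : commD Δ one g = 0 := by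
  unfold commD; rw [Rop_one hone]; simp; exact sub_self (Rop Δ g)

theorem commD_one_right {one : A →ₗ[k] k} (hone : ∀ f, dmul Δ one f = f ∧ dmul Δ f one = f)
    (f : (A →ₗ[k] k)) : commD Δ f one = 0 := by
  unfold commD; rw [Rop_one hone]; simp; exact sub_self (Rop Δ f)

theorem deriv_one_unit {one : A →ₗ[k] k} (hone : ∀ f, dmul Δ one f = f ∧ dmul Δ f one = f)
    {d : (A →ₗ[k] k) →ₗ[k] (A →ₗ[k] k)} (hd : IsDerivation Δ d) : d one = 0 := by
  have h := hd one one
  rw [(hone one).1, (hone (d one)).2, (hone (d one)).1] at h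
  exact right_eq_add.mp h

/-- The fully linearized Jordan identity. -/
theorem jordan_lin (h2 : (2 : k) ≠ 0) (hJ : IsJordanCoalgebra Δ)
    (x w z y : A →ₗ[k] k) :
    dmul Δ (dmul Δ (dmul Δ x w) y) z + dmul Δ (dmul Δ (dmul Δ x z) y) w
      + dmul Δ (dmul Δ (dmul Δ w z) y) x
    = dmul Δ (dmul Δ x w) (dmul Δ y z) + dmul Δ (dmul Δ x z) (dmul Δ y w)
      + dmul Δ (dmul Δ w z) (dmul Δ y x) := by
  obtain ⟨hc, hj⟩ := hJ
  set F : (A →ₗ[k] k) → (A →ₗ[k] k) → (A →ₗ[k] k) → (A →ₗ[k] k) :=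
    fun u v s => dmul Δ (dmul Δ (dmul Δ u v) y) s - dmul Δ (dmul Δ u v) (dmul Δ y s)
    with hF
  have hJ0 : ∀ u : A →ₗ[k] k, F u u u = 0 := fun u => by
    simp only [hF]; exact sub_eq_zero.mpr (hj u y)
  have two_smul_eq : ∀ e : A →ₗ[k] k, e + e = 0 → e = 0 := by
    intro e he
    have h' : (2 : k) • e = 0 := by rw [two_smul]; exact he
    exact (smul_eq_zero.mp h').resolve_left h2
  -- first linearization
  have G1 : ∀ x z : A →ₗ[k] k, F x x z + F x z x + F z x x = 0 := by
    intro x z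
    have e1 := hJ0 (x + z)
    have e2 := hJ0 (x - z)
    have e3 := hJ0 z
    have expand : F (x+z) (x+z) (x+z) - F (x-z) (x-z) (x-z)
        = (F x x z + F x z x + F z x x) + (F x x z + F x z x + F z x x)
          + (F z z z + F z z z) := by
      simp only [hF, dmul_add_left, dmul_add_right, dmul_sub_left, dmul_sub_right]
      abel
    rw [e1, e2, e3, sub_zero] at expand
    refine two_smul_eq _ ?_
    have h0 := expand.symm
    simpa using h0
  -- second linearization
  have e1 := G1 (x + w) z
  have e2 := G1 (x - w) z
  have expand : (F (x+w) (x+w) z + F (x+w) z (x+w) + F z (x+w) (x+w))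
      - (F (x-w) (x-w) z + F (x-w) z (x-w) + F z (x-w) (x-w))
      = (F x w z + F w x z + F x z w + F w z x + F z x w + F z w x)
        + (F x w z + F w x z + F x z w + F w z x + F z x w + F z w x) := by
    simp only [hF, dmul_add_left, dmul_add_right, dmul_sub_left, dmul_sub_right]
    abel
  rw [e1, e2, sub_zero] at expand
  have h6 : F x w z + F w x z + F x z w + F w z x + F z x w + F z w x = 0 := by
    refine two_smul_eq _ ?_
    exact expand.symm
  have c1 : F w x z = F x w z := by simp only [hF, hc w x]
  have c2 : F z x w = F x z w := by simp only [hF, hc z x]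
  have c3 : F z w x = F w z x := by simp only [hF, hc z w]
  rw [c1, c2, c3] at h6
  have hfin : F x w z + F x z w + F w z x = 0 := by
    refine two_smul_eq _ ?_
    rw [← h6]; abel
  rw [← sub_eq_zero, ← hfin]
  simp only [hF]
  abel

/-- `[R_f, R_g]` is a derivation of the dual Jordan algebra. -/
theorem commD_isDerivation (h2 : (2 : k) ≠ 0) (hJ : IsJordanCoalgebra Δ)
    (a b : A →ₗ[k] k) : IsDerivation Δ (commD Δ a b) := by
  intro x y
  have hc := hJ.1
  have hA := jordan_lin h2 hJ x y b a
  have hB := jordan_lin h2 hJ x y a b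
  have r1 : dmul Δ (dmul Δ x y) (dmul Δ b a) = dmul Δ (dmul Δ x y) (dmul Δ a b) := by
    rw [hc b a]
  have r2 : dmul Δ (dmul Δ x a) (dmul Δ b y) = dmul Δ (dmul Δ y b) (dmul Δ a x) := by
    rw [hc (dmul Δ x a) (dmul Δ b y), hc b y, hc x a]
  have r3 : dmul Δ (dmul Δ y a) (dmul Δ b x) = dmul Δ (dmul Δ x b) (dmul Δ a y) := by
    rw [hc (dmul Δ y a) (dmul Δ b x), hc b x, hc y a]
  rw [r1, r2, r3] at hB
  have key : dmul Δ (dmul Δ (dmul Δ x y) a) b + dmul Δ (dmul Δ (dmul Δ x b) a) y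
        + dmul Δ (dmul Δ (dmul Δ y b) a) x
      = dmul Δ (dmul Δ (dmul Δ x y) b) a + dmul Δ (dmul Δ (dmul Δ x a) b) y
        + dmul Δ (dmul Δ (dmul Δ y a) b) x := by
    rw [hA, hB]; abel
  simp only [commD_apply]
  rw [dmul_sub_left Δ, dmul_sub_right Δ,
    hc x (dmul Δ (dmul Δ y a) b), hc x (dmul Δ (dmul Δ y b) a)]
  have hz : (dmul Δ (dmul Δ (dmul Δ x y) a) b + dmul Δ (dmul Δ (dmul Δ x b) a) y
        + dmul Δ (dmul Δ (dmul Δ y b) a) x)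
      - (dmul Δ (dmul Δ (dmul Δ x y) b) a + dmul Δ (dmul Δ (dmul Δ x a) b) y
        + dmul Δ (dmul Δ (dmul Δ y a) b) x) = 0 := sub_eq_zero.mpr key
  rw [← sub_eq_zero, ← hz]
  abel

theorem commD_mem_WIntDer (h2 : (2 : k) ≠ 0) (hJ : IsJordanCoalgebra Δ)
    (f g : A →ₗ[k] k) : commD Δ f g ∈ WIntDer Δ := by
  refine ⟨commD_isDerivation h2 hJ f g, fun B hB hfin => ?_⟩
  exact ⟨commD Δ f g, Submodule.subset_span ⟨f, g, rfl⟩, fun _ _ _ => rfl⟩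

end Alg

set_option maxHeartbeats 2000000
set_option synthInstance.maxHeartbeats 2000000

section Act

variable (Δ : A →ₗ[k] A ⊗[k] A)

theorem dmul_apply_pairT (f g : A →ₗ[k] k) (a : A) :
    dmul Δ f g a = pairT f g (Δ a) := rfl

theorem ract_eq_cL (f : A →ₗ[k] k) (b : A) : ract Δ f b = cL f (Δ b) := rfl

theorem dmul_eq_ract (f g : A →ₗ[k] k) (a : A) :
    dmul Δ f g a = g (ract Δ f a) := by
  rw [dmul_apply_pairT, ract_eq_cL]
  induction Δ a with
  | zero => simp
  | tmul x y => rw [pairT_tmul, cL_tmul]; simp [mul_comm]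
  | add x y hx hy => simp [map_add, hx, hy]

theorem lact_pair (g h : A →ₗ[k] k) (a : A) :
    g (lact Δ h a) = dmul Δ g h a := by
  rw [dmul_apply_pairT]
  show g ((TensorProduct.rid k A) (TensorProduct.map LinearMap.id h (Δ a))) = _
  induction Δ a with
  | zero => simp
  | tmul x y => simp [pairT_tmul, mul_comm]
  | add x y hx hy => simp [map_add, hx, hy]

@[simp] theorem RopC_apply (x y : (A →ₗ[k] k) × A) : RopC Δ x y = cmul Δ y x := rfl

theorem commMixed_apply_pair (f' : A →ₗ[k] k) (a' : A) (f : A →ₗ[k] k) :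
    commMixed Δ f' a' (f, (0 : A))
      = (0, lact Δ (dmul Δ f f') a' - lact Δ f' (lact Δ f a')) := by
  show (RopC Δ (0, a') ∘ₗ RopC Δ (f', 0) - RopC Δ (f', 0) ∘ₗ RopC Δ (0, a')) (f, 0) = _
  simp only [LinearMap.sub_apply, LinearMap.comp_apply, RopC_apply, cmul]
  simp [dmul_zero_left, dmul_zero_right, Prod.ext_iff]

variable {Δ}

theorem phi_zero (φ : ↥(WIntDer Δ) →ₗ[k] (↥(CommAA Δ) →ₗ[k] k))
    (h : (0 : (A →ₗ[k] k) →ₗ[k] (A →ₗ[k] k)) ∈ WIntDer Δ) : φ ⟨0, h⟩ = 0 := by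
  have : (⟨0, h⟩ : ↥(WIntDer Δ)) = 0 := Subtype.ext rfl
  rw [this, map_zero]

theorem toFunc_apply' (φ : ↥(WIntDer Δ) →ₗ[k] (↥(CommAA Δ) →ₗ[k] k))
    (F : (A →ₗ[k] k) × (A →ₗ[k] k) × ((A →ₗ[k] k) →ₗ[k] (A →ₗ[k] k)) × (A →ₗ[k] k))
    (hF : F.2.2.1 ∈ WIntDer Δ) (l : LKKT Δ) :
    toFunc Δ φ F hF l
      = F.1 l.1 + F.2.1 l.2.1 + φ ⟨F.2.2.1, hF⟩ l.2.2.1 + F.2.2.2 l.2.2.2 := rfl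

theorem toFunc_congr (φ : ↥(WIntDer Δ) →ₗ[k] (↥(CommAA Δ) →ₗ[k] k))
    {F G : (A →ₗ[k] k) × (A →ₗ[k] k) × ((A →ₗ[k] k) →ₗ[k] (A →ₗ[k] k)) × (A →ₗ[k] k)}
    (h : F = G) (hF : F.2.2.1 ∈ WIntDer Δ) (hG : G.2.2.1 ∈ WIntDer Δ) (l : LKKT Δ) :
    toFunc Δ φ F hF l = toFunc Δ φ G hG l := by subst h; rfl

theorem toFunc_pin (φ : ↥(WIntDer Δ) →ₗ[k] (↥(CommAA Δ) →ₗ[k] k))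
    (hφbij : Function.Bijective φ) (x y : LKKT Δ)
    (h : ∀ (F : (A →ₗ[k] k) × (A →ₗ[k] k) ×
        ((A →ₗ[k] k) →ₗ[k] (A →ₗ[k] k)) × (A →ₗ[k] k))
      (hF : F.2.2.1 ∈ WIntDer Δ), toFunc Δ φ F hF x = toFunc Δ φ F hF y) : x = y := by
  have h1 : x.1 = y.1 := by
    apply dual_pin (k := k)
    intro f
    have := h (f, 0, 0, 0) (Submodule.zero_mem _)
    rw [toFunc_apply', toFunc_apply'] at this
    simpa [phi_zero] using this
  have h2 : x.2.1 = y.2.1 := by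
    apply dual_pin (k := k)
    intro f
    have := h (0, f, 0, 0) (Submodule.zero_mem _)
    rw [toFunc_apply', toFunc_apply'] at this
    simpa [phi_zero] using this
  have h4 : x.2.2.2 = y.2.2.2 := by
    apply dual_pin (k := k)
    intro f
    have := h (0, 0, 0, f) (Submodule.zero_mem _)
    rw [toFunc_apply', toFunc_apply'] at this
    simpa [phi_zero] using this
  have h3 : x.2.2.1 = y.2.2.1 := by
    have hψ : ∀ ψ : ↥(CommAA Δ) →ₗ[k] k, ψ x.2.2.1 = ψ y.2.2.1 := by
      intro ψ
      obtain ⟨e, rfl⟩ := hφbij.2 ψ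
      have := h (0, 0, ↑e, 0) e.2
      rw [toFunc_apply', toFunc_apply'] at this
      simpa using this
    exact dual_pin (k := k) (M := ↥(CommAA Δ)) x.2.2.1 y.2.2.1 hψ
  rw [show x = (x.1, x.2.1, x.2.2.1, x.2.2.2) from rfl,
    show y = (y.1, y.2.1, y.2.2.1, y.2.2.2) from rfl, h1, h2, h3, h4]

theorem coact_pin (φ : ↥(WIntDer Δ) →ₗ[k] (↥(CommAA Δ) →ₗ[k] k))
    (hφbij : Function.Bijective φ)
    (ΔL : LKKT Δ →ₗ[k] (LKKT Δ ⊗[k] LKKT Δ))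
    (L : Submodule k (LKKT Δ))
    (hΔL' : ∀ (f g : (A →ₗ[k] k) × (A →ₗ[k] k) ×
          ((A →ₗ[k] k) →ₗ[k] (A →ₗ[k] k)) × (A →ₗ[k] k))
      (hf : f.2.2.1 ∈ WIntDer Δ) (hg : g.2.2.1 ∈ WIntDer Δ)
      (hbr : (bracketStar Δ f g).2.2.1 ∈ WIntDer Δ) (l : LKKT Δ),
      toFunc Δ φ (bracketStar Δ f g) hbr l
        = pairT' (toFunc Δ φ f hf) (toFunc Δ φ g hg) (ΔL l))
    (hL' : ∀ b ∈ L, ΔL b ∈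
      LinearMap.range (TensorProduct.map L.subtype (LinearMap.id (R := k) (M := LKKT Δ)))
      ⊔ LinearMap.range (TensorProduct.map (LinearMap.id (R := k) (M := LKKT Δ)) L.subtype))
    (u : (A →ₗ[k] k) × (A →ₗ[k] k) × ((A →ₗ[k] k) →ₗ[k] (A →ₗ[k] k)) × (A →ₗ[k] k))
    (hu : u.2.2.1 ∈ WIntDer Δ)
    (hukill : ∀ l ∈ L, toFunc Δ φ u hu l = 0) {l : LKKT Δ} (hl : l ∈ L)
    (hbrall : ∀ (F : (A →ₗ[k] k) × (A →ₗ[k] k) ×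
        ((A →ₗ[k] k) →ₗ[k] (A →ₗ[k] k)) × (A →ₗ[k] k)),
      F.2.2.1 ∈ WIntDer Δ → (bracketStar Δ F u).2.2.1 ∈ WIntDer Δ)
    (T : LKKT Δ)
    (hT : ∀ (F : (A →ₗ[k] k) × (A →ₗ[k] k) ×
        ((A →ₗ[k] k) →ₗ[k] (A →ₗ[k] k)) × (A →ₗ[k] k))
      (hF : F.2.2.1 ∈ WIntDer Δ) (hbr : (bracketStar Δ F u).2.2.1 ∈ WIntDer Δ),
      toFunc Δ φ (bracketStar Δ F u) hbr l = toFunc Δ φ F hF T) :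
    T ∈ L := by
  have hWmem : cR (toFunc Δ φ u hu) (ΔL l) ∈ L :=
    contract_mem L (toFunc Δ φ u hu) (fun y => hukill ↑y y.2) (ΔL l) (hL' l hl)
  have hWT : cR (toFunc Δ φ u hu) (ΔL l) = T := by
    apply toFunc_pin φ hφbij
    intro F hF
    have e1 := hΔL' F u hF hu (hbrall F hF) l
    have e2 := pairT'_eq_cR (toFunc Δ φ F hF) (toFunc Δ φ u hu) (ΔL l)
    exact ((e1.trans e2).symm).trans (hT F hF (hbrall F hF))
  exact hWT ▸ hWmem

theorem phi_commD (φ : ↥(WIntDer Δ) →ₗ[k] (↥(CommAA Δ) →ₗ[k] k))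
    (hφ : ∀ (e : ↥(WIntDer Δ)) (f : A →ₗ[k] k) (a : A) (h : commMixed Δ f a ∈ CommAA Δ),
      φ e ⟨commMixed Δ f a, h⟩ = (e : ((A →ₗ[k] k) →ₗ[k] (A →ₗ[k] k))) f a)
    (hJ : IsJordanCoalgebra Δ) (f g : A →ₗ[k] k) (hd : commD Δ f g ∈ WIntDer Δ)
    (w : ((A →ₗ[k] k) × A) →ₗ[k] ((A →ₗ[k] k) × A)) (hw : w ∈ CommAA Δ) :
    φ ⟨commD Δ f g, hd⟩ ⟨w, hw⟩ = g ((w (f, (0 : A))).2) := by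
  have hc := hJ.1
  have hw' : w ∈ Submodule.span k {u | ∃ (f : (A →ₗ[k] k)) (a : A), u = commMixed Δ f a} :=
    hw
  induction hw' using Submodule.span_induction with
  | mem x hx =>
      obtain ⟨f', a', rfl⟩ := hx
      rw [hφ ⟨commD Δ f g, hd⟩ f' a' _]
      rw [commMixed_apply_pair]
      simp only [map_sub]
      rw [lact_pair, lact_pair, lact_pair]
      show (dmul Δ (dmul Δ f' f) g - dmul Δ (dmul Δ f' g) f) a' = _
      rw [hc f' g, hc f' f, hc (dmul Δ f f') g]
      simp [LinearMap.sub_apply]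
  | zero =>
      have hz : (⟨(0 : ((A →ₗ[k] k) × A) →ₗ[k] ((A →ₗ[k] k) × A)), by
          exact Submodule.zero_mem _⟩ : ↥(CommAA Δ)) = 0 := Subtype.ext rfl
      simp only [hz, map_zero]
      simp
  | add x y hx hy ihx ihy =>
      have hxy : (⟨x + y, Submodule.add_mem _ hx hy⟩ : ↥(CommAA Δ))
          = ⟨x, hx⟩ + ⟨y, hy⟩ := rfl
      rw [hxy, map_add]
      rw [ihx hx, ihy hy]
      simp [LinearMap.add_apply]
  | smul c x hx ih =>
      have hcx : (⟨c • x, Submodule.smul_mem _ c hx⟩ : ↥(CommAA Δ)) = c • ⟨x, hx⟩ := rfl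
      rw [hcx, map_smul]
      rw [ih hx]
      simp [LinearMap.smul_apply]

theorem ract_mem_of_coideal (V : Submodule k A) (hV : IsCoideal Δ V)
    (f : A →ₗ[k] k) (hf : ∀ v : ↥V, f ↑v = 0) {b : A} (hb : b ∈ V) :
    ract Δ f b ∈ V := by
  rw [ract_eq_cL]
  exact contract_left_mem V f hf (Δ b) (hV b hb)

end Act

set_option maxHeartbeats 2000000 in
set_option synthInstance.maxHeartbeats 2000000 in
/-- **Theorem 2 (second half).** If `L` is a coideal of the Lie coalgebra `⟨L(A), Δ_L⟩`
of Theorem 1 that is closed under `π` and contained in `U^⊥` (where `U` is the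
three-dimensional simple subalgebra of `L(A*)` spanned by `1, (1)', 1̄`), then
`V = A ∩ L` is a coideal of `⟨A, Δ⟩` and `L₁*(V) ⊆ L ⊆ L₂*(V)`. -/
theorem theorem2_converse {k : Type*} [Field k] {A : Type*} [AddCommGroup A] [Module k A]
    (h2 : (2 : k) ≠ 0) (Δ : A →ₗ[k] A ⊗[k] A) (hJ : IsJordanCoalgebra Δ)
    (one : A →ₗ[k] k) (hone : ∀ f, dmul Δ one f = f ∧ dmul Δ f one = f)
    (φ : ↥(WIntDer Δ) →ₗ[k] (↥(CommAA Δ) →ₗ[k] k))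
    (hφ : ∀ (e : ↥(WIntDer Δ)) (f : A →ₗ[k] k) (a : A) (h : commMixed Δ f a ∈ CommAA Δ),
      φ e ⟨commMixed Δ f a, h⟩ = (e : ((A →ₗ[k] k) →ₗ[k] (A →ₗ[k] k))) f a)
    (hφbij : Function.Bijective φ)
    (ΔL : LKKT Δ →ₗ[k] (LKKT Δ ⊗[k] LKKT Δ))
    (hΔL : ∀ (f g : (A →ₗ[k] k) × (A →ₗ[k] k) ×
          ((A →ₗ[k] k) →ₗ[k] (A →ₗ[k] k)) × (A →ₗ[k] k))
      (hf : f.2.2.1 ∈ WIntDer Δ) (hg : g.2.2.1 ∈ WIntDer Δ)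
      (hbr : (bracketStar Δ f g).2.2.1 ∈ WIntDer Δ) (l : LKKT Δ),
      toFunc Δ φ (bracketStar Δ f g) hbr l
        = pairT (M := LKKT Δ) (toFunc Δ φ f hf) (toFunc Δ φ g hg) (ΔL l))
    (L : Submodule k (LKKT Δ)) (hL : IsCoideal (A := LKKT Δ) ΔL L)
    (hLpi : ∀ l ∈ L, piL Δ l ∈ L)
    (hLU : ∀ l : LKKT Δ, l ∈ L → one l.1 = 0 ∧ one l.2.1 = 0 ∧ one l.2.2.2 = 0) :
    IsCoideal Δ (Submodule.comap (inclA Δ) L) ∧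
    (∀ v ∈ Submodule.comap (inclA Δ) L, one v = 0) ∧
    L1star Δ (Submodule.comap (inclA Δ) L) ≤ L ∧
    L ≤ L2star Δ (Submodule.comap (inclA Δ) L) := by
  classical
  -- monoid-world versions of the pinned hypotheses
  have hΔL' : ∀ (f g : (A →ₗ[k] k) × (A →ₗ[k] k) ×
        ((A →ₗ[k] k) →ₗ[k] (A →ₗ[k] k)) × (A →ₗ[k] k))
      (hf : f.2.2.1 ∈ WIntDer Δ) (hg : g.2.2.1 ∈ WIntDer Δ)
      (hbr : (bracketStar Δ f g).2.2.1 ∈ WIntDer Δ) (l : LKKT Δ),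
      toFunc Δ φ (bracketStar Δ f g) hbr l
        = pairT' (toFunc Δ φ f hf) (toFunc Δ φ g hg) (ΔL l) := hΔL
  have hL' : ∀ b ∈ L, ΔL b ∈
      LinearMap.range (TensorProduct.map L.subtype (LinearMap.id (R := k) (M := LKKT Δ)))
      ⊔ LinearMap.range (TensorProduct.map (LinearMap.id (R := k) (M := LKKT Δ)) L.subtype) :=
    hL
  set V := Submodule.comap (inclA Δ) L with hVdef
  have hmemV : ∀ a : A, a ∈ V ↔ ((a, 0, 0, 0) : LKKT Δ) ∈ L := fun a => Iff.rfl
  -- negation closure of L, componentwise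
  have hneg : ∀ (a b : A) (v : ↥(CommAA Δ)) (c : A),
      ((a, b, v, c) : LKKT Δ) ∈ L → ((-a, -b, -v, -c) : LKKT Δ) ∈ L := by
    intro a b v c hmem
    have hsm := L.smul_mem (-1 : k) hmem
    have e : (-1 : k) • ((a, b, v, c) : LKKT Δ) = ((-a, -b, -v, -c) : LKKT Δ) := by
      show ((-1 : k) • a, (-1 : k) • b, (-1 : k) • v, (-1 : k) • c) = _
      rw [neg_one_smul, neg_one_smul, neg_one_smul]
      rw [neg_one_smul]
    rwa [e] at hsm
  -- the three sl2-actions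
  have hkill1 : ∀ l ∈ L, toFunc Δ φ (one, 0, 0, 0) (Submodule.zero_mem _) l = 0 := by
    intro l hl
    rw [toFunc_apply']
    simp only [phi_zero, LinearMap.zero_apply, add_zero, zero_add]
    exact (hLU l hl).1
  have hkill2 : ∀ l ∈ L, toFunc Δ φ (0, one, 0, 0) (Submodule.zero_mem _) l = 0 := by
    intro l hl
    rw [toFunc_apply']
    simp only [phi_zero, LinearMap.zero_apply, add_zero, zero_add]
    exact (hLU l hl).2.1
  have hkill3 : ∀ l ∈ L, toFunc Δ φ (0, 0, 0, one) (Submodule.zero_mem _) l = 0 := by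
    intro l hl
    rw [toFunc_apply']
    simp only [phi_zero, LinearMap.zero_apply, add_zero, zero_add]
    exact (hLU l hl).2.2
  have hbr1 : ∀ (f₁ f₂ f₄ : A →ₗ[k] k) (d : (A →ₗ[k] k) →ₗ[k] (A →ₗ[k] k)),
      d ∈ WIntDer Δ →
      bracketStar Δ (f₁, f₂, d, f₄) (one, 0, 0, 0) = (-f₂, -f₄, 0, 0) := by
    intro f₁ f₂ f₄ d hd
    have hd1 : d one = 0 := deriv_one_unit hone (hd : IsWIntDer Δ d).1
    simp [bracketStar, dmul_zero_right, dmul_zero_left, commD_zero_left, commD_zero_right,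
      commD_one_left hone, commD_one_right hone, (hone f₂).1, (hone f₄).1, hd1, Prod.ext_iff]
    ext x a; simp
  have hbr2 : ∀ (f₁ f₂ f₄ : A →ₗ[k] k) (d : (A →ₗ[k] k) →ₗ[k] (A →ₗ[k] k)),
      d ∈ WIntDer Δ →
      bracketStar Δ (f₁, f₂, d, f₄) (0, one, 0, 0) = (f₁, 0, 0, -f₄) := by
    intro f₁ f₂ f₄ d hd
    have hd1 : d one = 0 := deriv_one_unit hone (hd : IsWIntDer Δ d).1
    simp [bracketStar, dmul_zero_right, dmul_zero_left, commD_zero_left, commD_zero_right,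
      commD_one_left hone, commD_one_right hone, (hone f₄).2, hd1, Prod.ext_iff]
    exact ⟨(hone f₁).2, by ext x a; simp⟩
  have hbr3 : ∀ (f₁ f₂ f₄ : A →ₗ[k] k) (d : (A →ₗ[k] k) →ₗ[k] (A →ₗ[k] k)),
      d ∈ WIntDer Δ →
      bracketStar Δ (f₁, f₂, d, f₄) (0, 0, 0, one) = (0, f₁, 0, f₂) := by
    intro f₁ f₂ f₄ d hd
    have hd1 : d one = 0 := deriv_one_unit hone (hd : IsWIntDer Δ d).1
    simp [bracketStar, dmul_zero_right, dmul_zero_left, commD_zero_left, commD_zero_right,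
      commD_one_left hone, commD_one_right hone, (hone f₁).2, (hone f₂).1, hd1, Prod.ext_iff]
    ext x a; simp
  have step1 : ∀ l ∈ L, ((0, -l.1, 0, -l.2.1) : LKKT Δ) ∈ L := by
    intro l hl
    refine coact_pin φ hφbij ΔL L hΔL' hL' (one, 0, 0, 0) (Submodule.zero_mem _)
      hkill1 hl ?_ _ ?_
    · rintro ⟨f₁, f₂, d, f₄⟩ hF
      rw [hbr1 f₁ f₂ f₄ d hF]
      exact Submodule.zero_mem _
    · rintro ⟨f₁, f₂, d, f₄⟩ hF hbr
      rw [toFunc_congr φ (hbr1 f₁ f₂ f₄ d hF) hbr (Submodule.zero_mem _) l,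
        toFunc_apply', toFunc_apply']
      simp [phi_zero]
  have step2 : ∀ l ∈ L, ((l.1, 0, 0, -l.2.2.2) : LKKT Δ) ∈ L := by
    intro l hl
    refine coact_pin φ hφbij ΔL L hΔL' hL' (0, one, 0, 0) (Submodule.zero_mem _)
      hkill2 hl ?_ _ ?_
    · rintro ⟨f₁, f₂, d, f₄⟩ hF
      rw [hbr2 f₁ f₂ f₄ d hF]
      exact Submodule.zero_mem _
    · rintro ⟨f₁, f₂, d, f₄⟩ hF hbr
      rw [toFunc_congr φ (hbr2 f₁ f₂ f₄ d hF) hbr (Submodule.zero_mem _) l,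
        toFunc_apply', toFunc_apply']
      simp [phi_zero]
  have step3 : ∀ l ∈ L, ((l.2.1, l.2.2.2, 0, 0) : LKKT Δ) ∈ L := by
    intro l hl
    refine coact_pin φ hφbij ΔL L hΔL' hL' (0, 0, 0, one) (Submodule.zero_mem _)
      hkill3 hl ?_ _ ?_
    · rintro ⟨f₁, f₂, d, f₄⟩ hF
      rw [hbr3 f₁ f₂ f₄ d hF]
      exact Submodule.zero_mem _
    · rintro ⟨f₁, f₂, d, f₄⟩ hF hbr
      rw [toFunc_congr φ (hbr3 f₁ f₂ f₄ d hF) hbr (Submodule.zero_mem _) l,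
        toFunc_apply', toFunc_apply']
      simp [phi_zero]
  -- all plain components of elements of L lie in V
  have hcomp3 : ∀ l ∈ L, l.2.2.2 ∈ V := by
    intro l hl
    have w2 := step2 l hl
    have w3 := step3 _ w2
    have w1 := step1 _ w3
    have w1' : ((0, (0 : A), (0 : ↥(CommAA Δ)), l.2.2.2) : LKKT Δ) ∈ L := by
      simpa using w1
    have wpi := hLpi _ w1'
    have : ((l.2.2.2, (0 : A), (0 : ↥(CommAA Δ)), (0 : A)) : LKKT Δ) ∈ L := by
      simpa [piL] using wpi
    exact (hmemV _).mpr this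
  have hcomp1 : ∀ l ∈ L, l.1 ∈ V := by
    intro l hl
    exact hcomp3 _ (hLpi l hl)
  have hcomp2 : ∀ l ∈ L, l.2.1 ∈ V := by
    intro l hl
    have h1 := step1 l hl
    have h2 := hcomp3 _ h1
    have h3 := V.neg_mem h2
    simpa using h3
  have tV2 : ∀ y ∈ V, ((0, y, 0, 0) : LKKT Δ) ∈ L := by
    intro y hy
    have h1 := step1 _ ((hmemV y).mp hy)
    have h2 := hneg _ _ _ _ h1
    simpa [show -(0 : ↥(CommAA Δ)) = 0 from neg_zero] using h2
  -- V is a coideal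
  have hco : IsCoideal Δ V := by
    intro a ha
    have hbr4 : ∀ f g : A →ₗ[k] k,
        bracketStar Δ (f, 0, 0, 0) (0, g, 0, 0) = (dmul Δ f g, 0, 0, 0) := by
      intro f g
      simp [bracketStar, dmul_zero_right, dmul_zero_left, commD_zero_left,
        commD_zero_right, Prod.ext_iff]
      ext x a; simp
    have hQ : TensorProduct.map
        (LinearMap.fst k A (A × (↥(CommAA Δ) × A)))
        ((LinearMap.fst k A (↥(CommAA Δ) × A)) ∘ₗ
          (LinearMap.snd k A (A × (↥(CommAA Δ) × A))))
        (ΔL (inclA Δ a)) = Δ a := by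
      apply tensor_pin
      intro f g
      rw [pairT_map]
      have hf0 : f ∘ₗ (LinearMap.fst k A (A × (↥(CommAA Δ) × A)))
          = toFunc Δ φ (f, 0, 0, 0) (Submodule.zero_mem _) := by
        apply LinearMap.ext
        intro x
        rw [toFunc_apply']
        simp [phi_zero]
      have hg0 : g ∘ₗ ((LinearMap.fst k A (↥(CommAA Δ) × A)) ∘ₗ
            (LinearMap.snd k A (A × (↥(CommAA Δ) × A))))
          = toFunc Δ φ (0, g, 0, 0) (Submodule.zero_mem _) := by
        apply LinearMap.ext
        intro x
        rw [toFunc_apply']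
        simp [phi_zero]
      have hbrm : (bracketStar Δ (f, 0, 0, 0) (0, g, 0, 0)).2.2.1 ∈ WIntDer Δ := by
        rw [hbr4 f g]; exact Submodule.zero_mem _
      rw [hf0, hg0,
        ← hΔL' (f, 0, 0, 0) (0, g, 0, 0) (Submodule.zero_mem _) (Submodule.zero_mem _)
          hbrm (inclA Δ a),
        toFunc_congr φ (hbr4 f g) hbrm (Submodule.zero_mem _) (inclA Δ a),
        toFunc_apply']
      have : (dmul Δ f g) ((inclA Δ a).1) = pairT f g (Δ a) := dmul_apply_pairT Δ f g a
      simp only [phi_zero, LinearMap.zero_apply, add_zero]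
      exact this
    have hfinal := coideal_map_mem
      (LinearMap.fst k A (A × (↥(CommAA Δ) × A)))
      ((LinearMap.fst k A (↥(CommAA Δ) × A)) ∘ₗ
        (LinearMap.snd k A (A × (↥(CommAA Δ) × A))))
      L V (fun x => hcomp1 ↑x x.2) (fun x => hcomp2 ↑x x.2)
      (ΔL (inclA Δ a)) (hL' _ ha)
    rw [hQ] at hfinal
    exact hfinal
  -- the dual annihilator kills components, and `ract` preserves V
  have hVkill : ∀ f ∈ V.dualAnnihilator, ∀ v : ↥V, f ↑v = 0 := by
    intro f hf v
    exact (Submodule.mem_dualAnnihilator f).mp hf ↑v v.2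
  have ractV : ∀ f ∈ V.dualAnnihilator, ∀ b ∈ V, ract Δ f b ∈ V := by
    intro f hf b hb
    exact ract_mem_of_coideal V hco f (hVkill f hf) hb
  -- the action of f ∈ V^⊥
  have hkillf : ∀ f ∈ V.dualAnnihilator, ∀ l ∈ L,
      toFunc Δ φ (f, 0, 0, 0) (Submodule.zero_mem _) l = 0 := by
    intro f hf l hl
    rw [toFunc_apply']
    simp only [phi_zero, LinearMap.zero_apply, add_zero, zero_add]
    exact (Submodule.mem_dualAnnihilator f).mp hf _ (hcomp1 l hl)
  have hbrf : ∀ (f f₁ f₂ f₄ : A →ₗ[k] k) (d : (A →ₗ[k] k) →ₗ[k] (A →ₗ[k] k)),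
      bracketStar Δ (f₁, f₂, d, f₄) (f, 0, 0, 0)
        = (-dmul Δ f f₂ - d f, -dmul Δ f f₄, commD Δ f f₄, 0) := by
    intro f f₁ f₂ f₄ d
    simp [bracketStar, dmul_zero_right, dmul_zero_left, commD_zero_left,
      commD_zero_right, Prod.ext_iff, sub_eq_add_neg]
    ext x a; simp
  have stepf : ∀ f ∈ V.dualAnnihilator, ∀ l ∈ L,
      ((0, -(ract Δ f l.1),
        -(⟨commMixed Δ f l.1, Submodule.subset_span ⟨f, l.1, rfl⟩⟩ : ↥(CommAA Δ)),
        (((l.2.2.1 : ↥(CommAA Δ)) : ((A →ₗ[k] k) × A) →ₗ[k] ((A →ₗ[k] k) × A)) (f, 0)).2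
          - ract Δ f l.2.1) : LKKT Δ) ∈ L := by
    intro f hf l hl
    refine coact_pin φ hφbij ΔL L hΔL' hL' (f, 0, 0, 0) (Submodule.zero_mem _)
      (hkillf f hf) hl ?_ _ ?_
    · rintro ⟨f₁, f₂, d, f₄⟩ hF
      rw [hbrf f f₁ f₂ f₄ d]
      exact commD_mem_WIntDer h2 hJ f f₄
    · rintro ⟨f₁, f₂, d, f₄⟩ hF hbr
      rw [toFunc_congr φ (hbrf f f₁ f₂ f₄ d) hbr (commD_mem_WIntDer h2 hJ f f₄) l,
        toFunc_apply', toFunc_apply']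
      rw [phi_commD φ hφ hJ f f₄ (commD_mem_WIntDer h2 hJ f f₄) ↑(l.2.2.1) (l.2.2.1).2]
      have e1 : ∀ x : A, (dmul Δ f f₂) x = f₂ (ract Δ f x) := fun x => dmul_eq_ract Δ f f₂ x
      have e2 : ∀ x : A, (dmul Δ f f₄) x = f₄ (ract Δ f x) := fun x => dmul_eq_ract Δ f f₄ x
      have e3 : φ ⟨d, hF⟩
          (⟨commMixed Δ f l.1, Submodule.subset_span ⟨f, l.1, rfl⟩⟩ : ↥(CommAA Δ))
          = d f l.1 := hφ ⟨d, hF⟩ f l.1 _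
      simp only [LinearMap.sub_apply, LinearMap.neg_apply, LinearMap.zero_apply,
        map_sub, map_zero, e1, e2]
      have hadd0 : (-(⟨commMixed Δ f l.1, Submodule.subset_span ⟨f, l.1, rfl⟩⟩ : ↥(CommAA Δ)))
          + (⟨commMixed Δ f l.1, Submodule.subset_span ⟨f, l.1, rfl⟩⟩ : ↥(CommAA Δ)) = 0 :=
        neg_add_cancel _
      have e4 : φ ⟨d, hF⟩
          (-(⟨commMixed Δ f l.1, Submodule.subset_span ⟨f, l.1, rfl⟩⟩ : ↥(CommAA Δ)))
          = -((d f) l.1) := by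
        have h0 := congrArg (φ ⟨d, hF⟩) hadd0
        rw [map_add, map_zero] at h0
        rw [e3] at h0
        linear_combination h0
      rw [e4]
      simp only [map_neg]
      ring
  -- L is contained in L₂*(V)
  have goal4 : L ≤ L2star Δ V := by
    intro l hl
    have h1 := hcomp1 l hl
    have h2 := hcomp2 l hl
    have h3 := hcomp3 l hl
    have hd : l.2.2.1 ∈ dstarSub Δ V := by
      intro f hf
      have hw := stepf f hf l hl
      have h4 := hcomp3 _ hw
      have hr := ractV f hf l.2.1 h2
      have hsum := V.add_mem h4 hr
      simpa using hsum
    exact Submodule.mem_prod.mpr ⟨h1, Submodule.mem_prod.mpr ⟨h2,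
      Submodule.mem_prod.mpr ⟨hd, h3⟩⟩⟩
  -- L₁*(V) is contained in L
  have goal3 : L1star Δ V ≤ L := by
    rintro ⟨x, y, w, z⟩ hmem
    rw [L1star, Submodule.mem_prod] at hmem
    obtain ⟨hx, hmem⟩ := hmem
    rw [Submodule.mem_prod] at hmem
    obtain ⟨hy, hmem⟩ := hmem
    rw [Submodule.mem_prod] at hmem
    obtain ⟨hw, hz⟩ := hmem
    have t1 : ((x, 0, 0, 0) : LKKT Δ) ∈ L := (hmemV x).mp hx
    have t2 : ((0, y, 0, 0) : LKKT Δ) ∈ L := tV2 y hy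
    have t4 : ((0, 0, 0, z) : LKKT Δ) ∈ L := by
      have := hLpi _ ((hmemV z).mp hz)
      simpa [piL] using this
    have t3 : ((0, 0, w, 0) : LKKT Δ) ∈ L := by
      have hwspan : (w : ((A →ₗ[k] k) × A) →ₗ[k] ((A →ₗ[k] k) × A)) ∈
          Submodule.span k
            {u | ∃ f ∈ V.dualAnnihilator, ∃ x ∈ V, u = commMixed Δ f x} := hw
      have hspanle : Submodule.span k
          {u | ∃ f ∈ V.dualAnnihilator, ∃ x ∈ V, u = commMixed Δ f x}
          ≤ Submodule.map (CommAA Δ).subtype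
            (Submodule.comap
              (LinearMap.prod (0 : ↥(CommAA Δ) →ₗ[k] A)
                (LinearMap.prod (0 : ↥(CommAA Δ) →ₗ[k] A)
                  (LinearMap.prod LinearMap.id (0 : ↥(CommAA Δ) →ₗ[k] A)))) L) := by
        rw [Submodule.span_le]
        rintro u ⟨f, hfann, x, hxV, rfl⟩
        have hwmem : commMixed Δ f x ∈ CommAA Δ := Submodule.subset_span ⟨f, x, rfl⟩
        have hsf := stepf f hfann _ ((hmemV x).mp hxV)
        have hsf' : ((0, -(ract Δ f x),
            -(⟨commMixed Δ f x, hwmem⟩ : ↥(CommAA Δ)), 0) : LKKT Δ) ∈ L := by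
          simpa using hsf
        have hr := tV2 _ (ractV f hfann x hxV)
        have hadd := L.add_mem hsf' hr
        have hadd' : ((0, 0, -(⟨commMixed Δ f x, hwmem⟩ : ↥(CommAA Δ)), 0) : LKKT Δ) ∈ L := by
          simpa using hadd
        have hfin := hneg _ _ _ _ hadd'
        have hfin' : ((0, 0, (⟨commMixed Δ f x, hwmem⟩ : ↥(CommAA Δ)), 0) : LKKT Δ) ∈ L := by
          simpa [show ∀ z : ↥(CommAA Δ), - -z = z from fun z => neg_neg z,
            show -(0 : ↥(CommAA Δ)) = 0 from neg_zero] using hfin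
        exact ⟨⟨commMixed Δ f x, hwmem⟩, hfin', rfl⟩
      obtain ⟨w', hw', hww⟩ := hspanle hwspan
      have : w' = w := Subtype.ext hww
      rw [this] at hw'
      exact hw'
    have := L.add_mem (L.add_mem (L.add_mem t1 t2) t3) t4
    simpa using this
  refine ⟨hco, fun v hv => (hLU _ hv).1, goal3, goal4⟩
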